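/- arXiv:1510.07168 — 3 statements merged into one kernel-verified Lean document; each statement's English description precedes it below -/
import Mathlib

section
/- Let F : ℝ → ℝ be continuous and nonnegative, let ε > 0, and let u be continuously differentiable on an interval [y₁, y₂] with y₁ < y₂. Then ∫_{y₁}^{y₂} [ (ε/2)·u'(x)² + F(u(x))/ε ] dx ≥ √2 · ∫_{u(y₁)}^{u(y₂)} √(F(s)) ds. -/
open MeasureTheory intervalIntegral

/-- Let `F : ℝ → ℝ` be continuous and nonnegative, `ε > 0`, and `u`
continuously differentiable on `[y₁, y₂]` (with derivative `u'`), `y₁ < y₂`. Then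
`∫_{y₁}^{y₂} [(ε/2)·u'(x)² + F(u(x))/ε] dx ≥ √2 · ∫_{u(y₁)}^{u(y₂)} √(F s) ds`. -/
theorem energy_ge_sqrt2_int
    (F : ℝ → ℝ) (hF : Continuous F) (hFnn : ∀ s, 0 ≤ F s)
    (ε : ℝ) (hε : 0 < ε) (y₁ y₂ : ℝ) (hy : y₁ < y₂)
    (u u' : ℝ → ℝ)
    (hu : ∀ x ∈ Set.Icc y₁ y₂, HasDerivAt u (u' x) x)
    (hu' : ContinuousOn u' (Set.Icc y₁ y₂)) :
    Real.sqrt 2 * (∫ s in (u y₁)..(u y₂), Real.sqrt (F s)) ≤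
      ∫ x in y₁..y₂, (ε / 2) * (u' x) ^ 2 + F (u x) / ε := by
  have huIcc : Set.uIcc y₁ y₂ = Set.Icc y₁ y₂ := Set.uIcc_of_le hy.le
  have hg : Continuous fun s => Real.sqrt (F s) := Real.continuous_sqrt.comp hF
  have hucont : ContinuousOn u (Set.Icc y₁ y₂) := fun x hx =>
    (hu x hx).continuousAt.continuousWithinAt
  have hcv : (∫ x in y₁..y₂, u' x * Real.sqrt (F (u x)))
      = ∫ s in (u y₁)..(u y₂), Real.sqrt (F s) := by
    have := intervalIntegral.integral_comp_smul_deriv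
      (f := u) (f' := u') (g := fun s => Real.sqrt (F s))
      (fun x hx => hu x (huIcc ▸ hx)) (huIcc ▸ hu') hg
    simpa [smul_eq_mul] using this
  rw [← hcv, ← intervalIntegral.integral_const_mul]
  have hint1 : IntervalIntegrable (fun x => Real.sqrt 2 * (u' x * Real.sqrt (F (u x))))
      volume y₁ y₂ := by
    apply ContinuousOn.intervalIntegrable
    rw [huIcc]
    exact (continuousOn_const.mul (hu'.mul (hg.comp_continuousOn hucont)))
  have hint2 : IntervalIntegrable (fun x => (ε / 2) * (u' x) ^ 2 + F (u x) / ε)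
      volume y₁ y₂ := by
    apply ContinuousOn.intervalIntegrable
    rw [huIcc]
    exact (continuousOn_const.mul (hu'.pow 2)).add
      (((hF.comp_continuousOn hucont)).div_const ε)
  apply intervalIntegral.integral_mono_on hy.le hint1 hint2
  intro x hx
  have h2 : Real.sqrt 2 ^ 2 = 2 := Real.sq_sqrt (by norm_num)
  have h2nn : (0:ℝ) ≤ Real.sqrt 2 := Real.sqrt_nonneg 2
  have hb : Real.sqrt (F (u x)) ^ 2 = F (u x) := Real.sq_sqrt (hFnn _)
  set a := u' x
  set b := Real.sqrt (F (u x))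
  have key : Real.sqrt 2 * (a * b) * (2 * ε) ≤ ((ε / 2) * a ^ 2 + b ^ 2 / ε) * (2 * ε) := by
    have hsq := sq_nonneg (ε * a - Real.sqrt 2 * b)
    field_simp
    nlinarith [sq_nonneg (ε * a - Real.sqrt 2 * b), hε.le]
  have := (mul_le_mul_iff_of_pos_right (by positivity : (0:ℝ) < 2 * ε)).mp key
  rw [hb] at this
  exact this
end

section
/- Let F : ℝ → ℝ satisfy the standing assumptions and set c₀ := √2 ∫_{−1}^{1} √(F(s)) ds. Let a < b, ε > 0, N ≥ 1, and let u ∈ C¹([a,b]). Suppose there are points a ≤ z₀ < z₁ < ⋯ < z_N ≤ b at which u alternates between the values −1 and +1 (i.e. u(z_i) = (−1)^{i+σ} for all i and some fixed σ ∈ {0,1}). Then ∫_a^b [ (ε/2)·u'(x)² + F(u(x))/ε ] dx ≥ N·c₀. -/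
open MeasureTheory intervalIntegral

/-- Standing assumptions on the double-well potential `F`: `F` is `C³`, `F → +∞` at
infinity, `F(±1) = F'(±1) = 0`, `F''(±1) > 0`, and the only critical points with
nonpositive value are `±1`. -/
def StandingAssumptions (F : ℝ → ℝ) : Prop :=
  ContDiff ℝ 3 F ∧
  Filter.Tendsto F (Filter.cocompact ℝ) Filter.atTop ∧
  F (-1) = 0 ∧ F 1 = 0 ∧ deriv F (-1) = 0 ∧ deriv F 1 = 0 ∧
  0 < iteratedDeriv 2 F (-1) ∧ 0 < iteratedDeriv 2 F 1 ∧
  {u : ℝ | deriv F u = 0 ∧ F u ≤ 0} = {-1, 1}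

/-- The minimal energy `c₀ := √2 ∫_{-1}^{1} √(F s) ds` of one transition. -/
noncomputable def transitionEnergy (F : ℝ → ℝ) : ℝ :=
  Real.sqrt 2 * ∫ s in (-1 : ℝ)..1, Real.sqrt (F s)

lemma F_nonneg_of_standing (F : ℝ → ℝ) (hF : StandingAssumptions F) : ∀ x, 0 ≤ F x := by
  obtain ⟨hC, hlim, h1, h2, _, _, _, _, hcrit⟩ := hF
  intro x
  obtain ⟨m, hm⟩ := hC.continuous.exists_forall_le hlim
  have hloc : IsLocalMin F m := Filter.Eventually.of_forall hm
  by_contra h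
  push_neg at h
  have hFm : F m < 0 := lt_of_le_of_lt (hm x) h
  have hmem : m ∈ {u : ℝ | deriv F u = 0 ∧ F u ≤ 0} := ⟨hloc.deriv_eq_zero, hFm.le⟩
  rw [hcrit] at hmem
  simp only [Set.mem_insert_iff, Set.mem_singleton_iff] at hmem
  rcases hmem with rfl | rfl
  · rw [h1] at hFm; linarith
  · rw [h2] at hFm; linarith

lemma young_ineq (ε p q : ℝ) (hε : 0 < ε) (hq : 0 ≤ q) :
    Real.sqrt 2 * Real.sqrt q * |p| ≤ ε / 2 * p ^ 2 + q / ε := by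
  have h := sq_nonneg (Real.sqrt (ε / 2) * |p| - Real.sqrt (q / ε))
  have e1 : Real.sqrt (ε / 2) ^ 2 = ε / 2 := Real.sq_sqrt (by positivity)
  have e2 : Real.sqrt (q / ε) ^ 2 = q / ε := Real.sq_sqrt (by positivity)
  have e3 : Real.sqrt (ε / 2) * Real.sqrt (q / ε) = Real.sqrt 2 * Real.sqrt q / 2 := by
    rw [← Real.sqrt_mul (by positivity)]
    have hsq : (Real.sqrt 2 * Real.sqrt q / 2) ^ 2 = q / 2 := by
      have a1 : Real.sqrt 2 ^ 2 = 2 := Real.sq_sqrt (by norm_num)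
      have a2 : Real.sqrt q ^ 2 = q := Real.sq_sqrt hq
      field_simp
      nlinarith [a1, a2]
    rw [show ε / 2 * (q / ε) = q / 2 by field_simp, ← hsq,
      Real.sqrt_sq (by positivity)]
  have key : ε / 2 * p ^ 2 + q / ε - Real.sqrt 2 * Real.sqrt q * |p| =
      (Real.sqrt (ε / 2) * |p| - Real.sqrt (q / ε)) ^ 2 := by
    have hp := sq_abs p
    linear_combination (-(|p| ^ 2)) * e1 - e2 + (2 * |p|) * e3 - (ε / 2) * hp
  linarith [h, key]

lemma interval_bound (F : ℝ → ℝ) (hF0 : ∀ x, 0 ≤ F x) (hFc : Continuous F)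
    (ε : ℝ) (hε : 0 < ε) (u u' : ℝ → ℝ) (c d : ℝ) (hcd : c ≤ d)
    (hu : ∀ x ∈ Set.Icc c d, HasDerivAt u (u' x) x)
    (hu' : ContinuousOn u' (Set.Icc c d))
    (v : ℝ) (hv : v = 1 ∨ v = -1)
    (hc : u c = v) (hd : u d = -v) :
    transitionEnergy F ≤ ∫ x in c..d, ε / 2 * (u' x) ^ 2 + F (u x) / ε := by
  set G : ℝ → ℝ := fun y => Real.sqrt 2 * Real.sqrt (F y) with hG
  have hGc : Continuous G := by
    exact continuous_const.mul (hFc.sqrt)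
  have hicc : Set.uIcc c d = Set.Icc c d := Set.uIcc_of_le hcd
  have hucont : ContinuousOn u (Set.Icc c d) := fun x hx =>
    ((hu x hx).continuousAt).continuousWithinAt
  -- change of variables
  have hcv : ∫ x in c..d, u' x • (G ∘ u) x = ∫ y in u c..u d, G y := by
    apply intervalIntegral.integral_comp_smul_deriv
    · rw [hicc]; exact hu
    · rw [hicc]; exact hu'
    · exact hGc
  -- pointwise bound
  have hpt : ∀ x ∈ Set.Icc c d, (-v) * (u' x * G (u x)) ≤ ε / 2 * (u' x) ^ 2 + F (u x) / ε := by
    intro x hx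
    have h1 : (-v) * (u' x * G (u x)) ≤ |u' x| * G (u x) := by
      have hGpos : 0 ≤ G (u x) := by positivity
      have habs : (-v) * u' x ≤ |u' x| := by
        rcases hv with rfl | rfl
        · simpa using neg_le_abs (u' x)
        · simpa using le_abs_self (u' x)
      nlinarith [abs_nonneg (u' x)]
    calc (-v) * (u' x * G (u x)) ≤ |u' x| * G (u x) := h1
      _ = Real.sqrt 2 * Real.sqrt (F (u x)) * |u' x| := by ring
      _ ≤ ε / 2 * (u' x) ^ 2 + F (u x) / ε := young_ineq ε (u' x) (F (u x)) hε (hF0 _)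
  -- integrability
  have hi1 : IntervalIntegrable (fun x => (-v) * (u' x * G (u x))) volume c d := by
    apply ContinuousOn.intervalIntegrable
    rw [hicc]
    exact (continuousOn_const.mul (hu'.mul (hGc.comp_continuousOn hucont)))
  have hi2 : IntervalIntegrable (fun x => ε / 2 * (u' x) ^ 2 + F (u x) / ε) volume c d := by
    apply ContinuousOn.intervalIntegrable
    rw [hicc]
    exact (continuousOn_const.mul (hu'.pow 2)).add ((hFc.comp_continuousOn hucont).div_const ε)
  have hmono := intervalIntegral.integral_mono_on hcd hi1 hi2 hpt
  -- compute the left integral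
  have hleft : ∫ x in c..d, (-v) * (u' x * G (u x)) = transitionEnergy F := by
    have : ∫ x in c..d, (-v) * (u' x * G (u x)) = (-v) * ∫ x in c..d, u' x • (G ∘ u) x := by
      rw [← intervalIntegral.integral_const_mul]
      rfl
    rw [this, hcv, hc, hd]
    have hint : ∫ y in (-1:ℝ)..1, G y = transitionEnergy F := by
      rw [transitionEnergy, ← intervalIntegral.integral_const_mul]
    rcases hv with rfl | rfl
    · rw [intervalIntegral.integral_symm]
      simpa using hint
    · simpa using hint
  rw [hleft] at hmono
  exact hmono

/-- If `u ∈ C¹([a,b])` takes alternately the values `-1` and `+1`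
at `N+1` ordered points of `[a,b]`, then its Allen–Cahn energy is at least `N·c₀`. -/
theorem energy_lower_bound_N_transitions
    (F : ℝ → ℝ) (hF : StandingAssumptions F)
    (a b ε : ℝ) (hab : a < b) (hε : 0 < ε)
    (N : ℕ) (hN : 1 ≤ N)
    (u u' : ℝ → ℝ)
    (hu : ∀ x ∈ Set.Icc a b, HasDerivAt u (u' x) x)
    (hu' : ContinuousOn u' (Set.Icc a b))
    (z : Fin (N + 1) → ℝ) (hz : StrictMono z)
    (hza : a ≤ z 0) (hzb : z (Fin.last N) ≤ b)
    (σ : ℕ) (hσ : σ = 0 ∨ σ = 1)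
    (hvals : ∀ i : Fin (N + 1), u (z i) = (-1 : ℝ) ^ ((i : ℕ) + σ)) :
    (N : ℝ) * transitionEnergy F ≤
      ∫ x in a..b, ε / 2 * (u' x) ^ 2 + F (u x) / ε := by
  have hFc : Continuous F := hF.1.continuous
  have hF0 := F_nonneg_of_standing F hF
  set g : ℝ → ℝ := fun x => ε / 2 * (u' x) ^ 2 + F (u x) / ε with hg
  have hucont : ContinuousOn u (Set.Icc a b) := fun x hx =>
    ((hu x hx).continuousAt).continuousWithinAt
  have hgcont : ContinuousOn g (Set.Icc a b) :=
    (continuousOn_const.mul (hu'.pow 2)).add ((hFc.comp_continuousOn hucont).div_const ε)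
  have hmem : ∀ i : Fin (N + 1), z i ∈ Set.Icc a b := fun i =>
    ⟨le_trans hza (hz.monotone (Fin.zero_le i)),
     le_trans (hz.monotone (Fin.le_last i)) hzb⟩
  have hint : ∀ c d : ℝ, c ∈ Set.Icc a b → d ∈ Set.Icc a b →
      IntervalIntegrable g volume c d := by
    intro c d hc hd
    apply (hgcont.mono ?_).intervalIntegrable
    rw [← Set.uIcc_of_le hab.le]
    exact Set.uIcc_subset_uIcc ((Set.uIcc_of_le hab.le).symm ▸ hc)
      ((Set.uIcc_of_le hab.le).symm ▸ hd)
  have hg0 : ∀ x ∈ Set.Icc a b, 0 ≤ g x := by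
    intro x hx
    have := hF0 (u x)
    positivity
  -- auxiliary sequence
  set w : ℕ → ℝ := fun k => z ⟨min k N, Nat.lt_succ_of_le (min_le_right k N)⟩ with hw
  have hwk : ∀ k (h : k ≤ N), w k = z ⟨k, Nat.lt_succ_of_le h⟩ := by
    intro k h
    simp only [hw]
    congr 1
    exact Fin.ext (min_eq_left h)
  have hwmem : ∀ k, w k ∈ Set.Icc a b := fun k => hmem _
  -- per-interval bound
  have hstep : ∀ k, k < N → transitionEnergy F ≤ ∫ x in (w k)..(w (k + 1)), g x := by
    intro k hk
    have hk1 : k + 1 ≤ N := hk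
    have e1 : w k = z ⟨k, Nat.lt_succ_of_le hk.le⟩ := hwk k hk.le
    have e2 : w (k + 1) = z ⟨k + 1, Nat.lt_succ_of_le hk1⟩ := hwk (k + 1) hk1
    have hcd : w k ≤ w (k + 1) := by
      rw [e1, e2]
      exact (hz (by exact Fin.mk_lt_mk.mpr (Nat.lt_succ_self k))).le
    have hsub : Set.Icc (w k) (w (k + 1)) ⊆ Set.Icc a b :=
      Set.Icc_subset_Icc (hwmem k).1 (hwmem (k + 1)).2
    have hvk : u (w k) = (-1 : ℝ) ^ (k + σ) := by rw [e1]; simpa using hvals _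
    have hvk1 : u (w (k + 1)) = -(-1 : ℝ) ^ (k + σ) := by
      rw [e2]
      have := hvals ⟨k + 1, Nat.lt_succ_of_le hk1⟩
      simpa [pow_succ, pow_add, mul_comm] using this
    have hv : ((-1 : ℝ) ^ (k + σ) = 1) ∨ ((-1 : ℝ) ^ (k + σ) = -1) :=
      (Nat.even_or_odd (k + σ)).imp (fun h => h.neg_one_pow) (fun h => h.neg_one_pow)
    exact interval_bound F hF0 hFc ε hε u u' (w k) (w (k + 1)) hcd
      (fun x hx => hu x (hsub hx)) (hu'.mono hsub) _ hv hvk hvk1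
  -- sum of adjacent intervals
  have hsum : ∑ k ∈ Finset.range N, ∫ x in (w k)..(w (k + 1)), g x = ∫ x in (w 0)..(w N), g x := by
    apply intervalIntegral.sum_integral_adjacent_intervals
    intro k hk
    exact hint _ _ (hwmem k) (hwmem (k + 1))
  have hNbound : (N : ℝ) * transitionEnergy F ≤ ∫ x in (w 0)..(w N), g x := by
    rw [← hsum]
    calc (N : ℝ) * transitionEnergy F = ∑ k ∈ Finset.range N, transitionEnergy F := by
          simp [Finset.sum_const, mul_comm]
      _ ≤ ∑ k ∈ Finset.range N, ∫ x in (w k)..(w (k + 1)), g x := by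
          apply Finset.sum_le_sum
          intro k hk
          exact hstep k (Finset.mem_range.mp hk)
  -- split [a,b]
  have hw0 : w 0 = z 0 := by rw [hwk 0 (Nat.zero_le N)]; rfl
  have hwN : w N = z (Fin.last N) := by rw [hwk N le_rfl]; rfl
  have i1 := hint a (w 0) (Set.left_mem_Icc.mpr hab.le) (hwmem 0)
  have i2 := hint (w 0) (w N) (hwmem 0) (hwmem N)
  have i3 := hint (w N) b (hwmem N) (Set.right_mem_Icc.mpr hab.le)
  have hsplit1 : ∫ x in a..b, g x =
      (∫ x in a..(w 0), g x) + (∫ x in (w 0)..(w N), g x) + (∫ x in (w N)..b, g x) := by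
    rw [intervalIntegral.integral_add_adjacent_intervals i1 i2,
      intervalIntegral.integral_add_adjacent_intervals (i1.trans i2) i3]
  have hpos1 : 0 ≤ ∫ x in a..(w 0), g x := by
    apply intervalIntegral.integral_nonneg (hw0 ▸ hza)
    intro x hx
    exact hg0 x ⟨hx.1, hx.2.trans (hwmem 0).2⟩
  have hpos2 : 0 ≤ ∫ x in (w N)..b, g x := by
    apply intervalIntegral.integral_nonneg (hwN ▸ hzb)
    intro x hx
    exact hg0 x ⟨(hwmem N).1.trans hx.1, hx.2⟩
  rw [hsplit1]
  linarith [hNbound, hpos1, hpos2]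
end

section
/- Let a < 0 < b and define φ^ε(x) := tanh(x/(√2·ε)) for ε > 0. Then lim_{ε→0} ∫_a^b [ (ε/2)·(φ^ε)'(x)² + (1/(4ε))·(φ^ε(x)² − 1)² ] dx = 2√2/3. -/
open Filter MeasureTheory intervalIntegral

private lemma my_hasDerivAt_tanh (x : ℝ) :
    HasDerivAt Real.tanh (1 - Real.tanh x ^ 2) x := by
  have hc := Real.cosh_pos x
  have h : HasDerivAt Real.tanh
      ((Real.cosh x * Real.cosh x - Real.sinh x * Real.sinh x) / Real.cosh x ^ 2) x := by
    have h0 := (Real.hasDerivAt_sinh x).div (Real.hasDerivAt_cosh x) hc.ne'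
    have heq : (fun y => Real.sinh y / Real.cosh y) = Real.tanh :=
      funext fun y => (Real.tanh_eq_sinh_div_cosh y).symm
    have h0' : HasDerivAt (fun y => Real.sinh y / Real.cosh y) _ x := h0
    rwa [heq] at h0'
  convert h using 1
  have h2 := Real.cosh_sq_sub_sinh_sq x
  field_simp [Real.tanh_eq_sinh_div_cosh]
  rw [Real.tanh_eq_sinh_div_cosh, sub_mul, div_pow, div_mul_cancel₀ _ (pow_ne_zero 2 hc.ne'), one_mul]

private lemma my_tanh_eq (x : ℝ) :
    Real.tanh x = (1 - Real.exp (-2 * x)) / (1 + Real.exp (-2 * x)) := by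
  have h1 : Real.exp x > 0 := Real.exp_pos x
  have h2 : Real.exp (-x) = (Real.exp x)⁻¹ := Real.exp_neg x
  have h3 : Real.exp (-2 * x) = (Real.exp x)⁻¹ ^ 2 := by
    rw [← Real.exp_neg]; rw [← Real.exp_nat_mul]; ring_nf
  rw [Real.tanh_eq_sinh_div_cosh, Real.sinh_eq, Real.cosh_eq, h2, h3]
  have h4 : 1 + ((Real.exp x)⁻¹) ^ 2 > 0 := by positivity
  field_simp

private lemma my_continuous_tanh : Continuous Real.tanh := by
  have : Real.tanh = fun x => Real.sinh x / Real.cosh x := by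
    funext x; exact Real.tanh_eq_sinh_div_cosh x
  rw [this]
  exact Real.continuous_sinh.div Real.continuous_cosh fun x => (Real.cosh_pos x).ne'

private lemma my_tendsto_tanh_atTop : Tendsto Real.tanh atTop (nhds 1) := by
  have h : Tendsto (fun x : ℝ => Real.exp (-2 * x)) atTop (nhds 0) := by
    apply Real.tendsto_exp_atBot.comp
    exact (tendsto_const_mul_atBot_of_neg (by norm_num)).mpr tendsto_id
  have hone : Tendsto (fun _ : ℝ => (1:ℝ)) atTop (nhds 1) := tendsto_const_nhds
  have h2 := Filter.Tendsto.div (hone.sub h) (hone.add h) (by norm_num : (1:ℝ) + 0 ≠ 0)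
  norm_num at h2
  refine h2.congr fun x => ?_
  simp only [Pi.div_apply, ← neg_mul]
  exact (my_tanh_eq x).symm

private lemma my_tendsto_tanh_atBot : Tendsto Real.tanh atBot (nhds (-1)) := by
  have := (my_tendsto_tanh_atTop.comp tendsto_neg_atBot_atTop).neg
  simp only [Function.comp] at this
  simpa [Real.tanh_neg] using this

private lemma my_aux (s ε t : ℝ) (hs : s ^ 2 = 2) (hs0 : s ≠ 0) (hε : ε ≠ 0) :
    ε / 2 * ((1 - t ^ 2) / (s * ε)) ^ 2 + 1 / (4 * ε) * (t ^ 2 - 1) ^ 2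
      = s / 2 * ((1 - t ^ 2) / (s * ε) - 3 * t ^ 2 * ((1 - t ^ 2) / (s * ε)) / 3) := by
  have h1 : ((1 - t ^ 2) / (s * ε)) ^ 2 = (1 - t ^ 2) ^ 2 / (2 * ε ^ 2) := by
    rw [div_pow, mul_pow, hs]
  rw [h1, show s / 2 * ((1 - t ^ 2) / (s * ε) - 3 * t ^ 2 * ((1 - t ^ 2) / (s * ε)) / 3)
      = s / (s * ε) * ((1 - t ^ 2) * (1 - t ^ 2) / 2) from by ring,
    div_mul_cancel_left₀ hs0]
  field_simp
  ring

/-- For `a < 0 < b`, the Allen–Cahn energy of the standing wave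
`φ^ε(x) := tanh (x/(√2 ε))`, with potential `F(u) = (1/4)(u²-1)²`, converges to
`2√2/3` as `ε → 0⁺`. -/
theorem tanh_energy_limit (a b : ℝ) (ha : a < 0) (hb : 0 < b) :
    Tendsto
      (fun ε : ℝ =>
        ∫ x in a..b,
          ε / 2 * (deriv (fun y : ℝ => Real.tanh (y / (Real.sqrt 2 * ε))) x) ^ 2
            + 1 / (4 * ε) * ((Real.tanh (x / (Real.sqrt 2 * ε))) ^ 2 - 1) ^ 2)
      (nhdsWithin 0 (Set.Ioi 0)) (nhds (2 * Real.sqrt 2 / 3)) := by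
  have hs2 : (0:ℝ) < Real.sqrt 2 := by positivity
  have hsq : Real.sqrt 2 ^ 2 = 2 := Real.sq_sqrt (by norm_num)
  -- the closed-form value of the integral
  set G : ℝ → ℝ → ℝ := fun ε x =>
    Real.sqrt 2 / 2 * (Real.tanh (x / (Real.sqrt 2 * ε))
      - Real.tanh (x / (Real.sqrt 2 * ε)) ^ 3 / 3) with hG
  have key : ∀ ε : ℝ, 0 < ε →
      (∫ x in a..b,
          ε / 2 * (deriv (fun y : ℝ => Real.tanh (y / (Real.sqrt 2 * ε))) x) ^ 2
            + 1 / (4 * ε) * ((Real.tanh (x / (Real.sqrt 2 * ε))) ^ 2 - 1) ^ 2)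
        = G ε b - G ε a := by
    intro ε hε
    have hd : Real.sqrt 2 * ε ≠ 0 := by positivity
    have hphi : ∀ x : ℝ, HasDerivAt (fun y : ℝ => Real.tanh (y / (Real.sqrt 2 * ε)))
        ((1 - Real.tanh (x / (Real.sqrt 2 * ε)) ^ 2) / (Real.sqrt 2 * ε)) x := by
      intro x
      have h1 : HasDerivAt (fun y : ℝ => y / (Real.sqrt 2 * ε)) (1 / (Real.sqrt 2 * ε)) x :=
        (hasDerivAt_id x).div_const _
      have := (my_hasDerivAt_tanh (x / (Real.sqrt 2 * ε))).comp x h1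
      simpa [div_eq_mul_inv, mul_comm, Function.comp_def] using this
    have hderiv : ∀ x : ℝ, deriv (fun y : ℝ => Real.tanh (y / (Real.sqrt 2 * ε))) x
        = (1 - Real.tanh (x / (Real.sqrt 2 * ε)) ^ 2) / (Real.sqrt 2 * ε) :=
      fun x => (hphi x).deriv
    have hGd : ∀ x : ℝ, HasDerivAt (G ε)
        (ε / 2 * (deriv (fun y : ℝ => Real.tanh (y / (Real.sqrt 2 * ε))) x) ^ 2
            + 1 / (4 * ε) * ((Real.tanh (x / (Real.sqrt 2 * ε))) ^ 2 - 1) ^ 2) x := by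
      intro x
      have h1 := hphi x
      have h2 : HasDerivAt (G ε)
          (Real.sqrt 2 / 2 * (((1 - Real.tanh (x / (Real.sqrt 2 * ε)) ^ 2) / (Real.sqrt 2 * ε))
            - 3 * Real.tanh (x / (Real.sqrt 2 * ε)) ^ 2 *
              ((1 - Real.tanh (x / (Real.sqrt 2 * ε)) ^ 2) / (Real.sqrt 2 * ε)) / 3)) x := by
        have h3 := (h1.sub ((h1.pow 3).div_const 3)).const_mul (Real.sqrt 2 / 2)
        exact h3.congr_deriv (by norm_num)
      convert h2 using 1
      rw [hderiv x]
      exact my_aux (Real.sqrt 2) ε _ hsq hs2.ne' hε.ne'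
    have hint : IntervalIntegrable
        (fun x => ε / 2 * (deriv (fun y : ℝ => Real.tanh (y / (Real.sqrt 2 * ε))) x) ^ 2
            + 1 / (4 * ε) * ((Real.tanh (x / (Real.sqrt 2 * ε))) ^ 2 - 1) ^ 2) volume a b := by
      apply Continuous.intervalIntegrable
      have hc : Continuous fun x : ℝ => Real.tanh (x / (Real.sqrt 2 * ε)) :=
        my_continuous_tanh.comp (continuous_id.div_const _)
      simp only [hderiv]
      fun_prop
    exact integral_eq_sub_of_hasDerivAt (fun x _ => hGd x) hint
  -- now compute the limit of G ε b - G ε a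
  have hbb : Tendsto (fun ε : ℝ => Real.tanh (b / (Real.sqrt 2 * ε)))
      (nhdsWithin 0 (Set.Ioi 0)) (nhds 1) := by
    apply my_tendsto_tanh_atTop.comp
    have : Tendsto (fun ε : ℝ => (b / Real.sqrt 2) * ε⁻¹) (nhdsWithin 0 (Set.Ioi 0)) atTop :=
      (tendsto_inv_nhdsGT_zero).const_mul_atTop (by positivity)
    refine this.congr fun ε => by field_simp
  have haa : Tendsto (fun ε : ℝ => Real.tanh (a / (Real.sqrt 2 * ε)))
      (nhdsWithin 0 (Set.Ioi 0)) (nhds (-1)) := by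
    apply my_tendsto_tanh_atBot.comp
    have : Tendsto (fun ε : ℝ => (a / Real.sqrt 2) * ε⁻¹) (nhdsWithin 0 (Set.Ioi 0)) atBot := by
      exact (tendsto_inv_nhdsGT_zero).const_mul_atTop_of_neg (div_neg_of_neg_of_pos ha hs2)
    refine this.congr fun ε => by field_simp
  have hlim : Tendsto (fun ε : ℝ => G ε b - G ε a) (nhdsWithin 0 (Set.Ioi 0))
      (nhds (2 * Real.sqrt 2 / 3)) := by
    have h1 : Tendsto (fun ε : ℝ => G ε b) (nhdsWithin 0 (Set.Ioi 0))
        (nhds (Real.sqrt 2 / 2 * (1 - 1 ^ 3 / 3))) :=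
      (tendsto_const_nhds.mul (hbb.sub ((hbb.pow 3).div_const 3)))
    have h2 : Tendsto (fun ε : ℝ => G ε a) (nhdsWithin 0 (Set.Ioi 0))
        (nhds (Real.sqrt 2 / 2 * (-1 - (-1) ^ 3 / 3))) :=
      (tendsto_const_nhds.mul (haa.sub ((haa.pow 3).div_const 3)))
    have := h1.sub h2
    convert this using 2
    ring
  refine hlim.congr' ?_
  filter_upwards [self_mem_nhdsWithin] with ε hε
  exact (key ε hε).symm
end
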